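/- Let h : ℝ → ℝ be strictly monotone (either strictly increasing or strictly decreasing) and let X, Y be real-valued random variables on a common probability space with continuous cdfs G_X, G_Y. Then d₁²(h(X), h(Y)) = d₁²(X, Y), i.e. 3·E[|G_{h(X)}(h(X)) − G_{h(Y)}(h(Y))|²] = 3·E[|G_X(X) − G_Y(Y)|²] (invariance of the dependence part d₁ of the distance d_θ under monotone transformations). -/

import Mathlib

open MeasureTheory Set

/-- The cdf of a real random variable `X` on `(Ω, μ)`. -/
noncomputable def cdfOf {Ω : Type*} [MeasurableSpace Ω] (μ : Measure Ω) (X : Ω → ℝ) :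
    ℝ → ℝ :=
  fun x => (μ {ω | X ω ≤ x}).toReal

lemma cdf_comp_mono {Ω : Type*} [MeasurableSpace Ω] (μ : Measure Ω) (X : Ω → ℝ)
    {h : ℝ → ℝ} (hm : StrictMono h) (x : ℝ) :
    cdfOf μ (fun ω' => h (X ω')) (h x) = cdfOf μ X x := by
  have hs : {ω | h (X ω) ≤ h x} = {ω | X ω ≤ x} := by
    ext ω; simp [hm.le_iff_le]
  unfold cdfOf
  rw [hs]

lemma atom_zero {Ω : Type*} [MeasurableSpace Ω] (μ : Measure Ω) [IsProbabilityMeasure μ]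
    (X : Ω → ℝ) (hX : Measurable X) (hc : Continuous (cdfOf μ X)) (x : ℝ) :
    μ {ω | X ω = x} = 0 := by
  have hfin : ∀ s : Set Ω, μ s ≠ ⊤ := fun s => measure_ne_top μ s
  have key : ∀ ε > (0:ℝ), (μ {ω | X ω = x}).toReal ≤ ε := by
    intro ε hε
    have hca : ContinuousAt (cdfOf μ X) x := hc.continuousAt
    rw [Metric.continuousAt_iff] at hca
    obtain ⟨δ, hδ, hδ'⟩ := hca ε hε
    have hyd : dist (x - δ/2) x < δ := by
      rw [Real.dist_eq]
      rw [abs_of_nonpos (by linarith)]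
      linarith
    have hlt := hδ' hyd
    rw [Real.dist_eq] at hlt
    have hsub : {ω | X ω ≤ x - δ/2} ⊆ {ω | X ω ≤ x} := by
      intro ω hω; simp only [mem_setOf_eq] at *; linarith
    have hmle : μ {ω | X ω ≤ x - δ/2} ≤ μ {ω | X ω ≤ x} := measure_mono hsub
    have hdiff : μ ({ω | X ω ≤ x} \ {ω | X ω ≤ x - δ/2})
        = μ {ω | X ω ≤ x} - μ {ω | X ω ≤ x - δ/2} :=
      measure_diff hsub (hX measurableSet_Iic).nullMeasurableSet (hfin _)
    have hsub2 : {ω | X ω = x} ⊆ {ω | X ω ≤ x} \ {ω | X ω ≤ x - δ/2} := by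
      intro ω hω
      simp only [mem_setOf_eq] at hω
      constructor
      · simp [hω]
      · simp only [mem_setOf_eq]; rw [hω]; push_neg; linarith
    calc (μ {ω | X ω = x}).toReal
        ≤ (μ ({ω | X ω ≤ x} \ {ω | X ω ≤ x - δ/2})).toReal := by
          apply ENNReal.toReal_mono (hfin _) (measure_mono hsub2)
      _ = cdfOf μ X x - cdfOf μ X (x - δ/2) := by
          rw [hdiff, ENNReal.toReal_sub_of_le hmle (hfin _)]; rfl
      _ ≤ ε := by
          have : cdfOf μ X x - cdfOf μ X (x - δ/2) ≤ |cdfOf μ X (x - δ/2) - cdfOf μ X x| := by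
            rw [abs_sub_comm]; exact le_abs_self _
          linarith
  have h0 : (μ {ω | X ω = x}).toReal = 0 := by
    by_contra hne
    have hpos : (0:ℝ) < (μ {ω | X ω = x}).toReal :=
      lt_of_le_of_ne ENNReal.toReal_nonneg (Ne.symm hne)
    have := key ((μ {ω | X ω = x}).toReal / 2) (by linarith)
    linarith
  exact (ENNReal.toReal_eq_zero_iff _).mp h0 |>.resolve_right (hfin _)

lemma cdf_comp_anti {Ω : Type*} [MeasurableSpace Ω] (μ : Measure Ω) [IsProbabilityMeasure μ]
    (X : Ω → ℝ) (hX : Measurable X) (hc : Continuous (cdfOf μ X))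
    {h : ℝ → ℝ} (hm : StrictAnti h) (x : ℝ) :
    cdfOf μ (fun ω' => h (X ω')) (h x) = 1 - cdfOf μ X x := by
  have hset : {ω | h (X ω) ≤ h x} = {ω | x ≤ X ω} := by
    ext ω; simp [hm.le_iff_ge]
  have hlt : μ {ω | X ω < x} = μ {ω | X ω ≤ x} := by
    apply le_antisymm
    · apply measure_mono
      intro ω hω
      simp only [mem_setOf_eq] at hω ⊢
      exact le_of_lt hω
    have hun : {ω | X ω ≤ x} ⊆ {ω | X ω < x} ∪ {ω | X ω = x} := by
      intro ω hω
      simp only [mem_setOf_eq] at hω ⊢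
      rcases lt_or_eq_of_le hω with h' | h'
      · exact Or.inl h'
      · exact Or.inr h'
    calc μ {ω | X ω ≤ x} ≤ μ ({ω | X ω < x} ∪ {ω | X ω = x}) := measure_mono hun
      _ ≤ μ {ω | X ω < x} + μ {ω | X ω = x} := measure_union_le _ _
      _ = μ {ω | X ω < x} := by rw [atom_zero μ X hX hc x, add_zero]
  have hcompl : μ {ω | x ≤ X ω} = 1 - μ {ω | X ω ≤ x} := by
    have : {ω | x ≤ X ω} = {ω | X ω < x}ᶜ := by ext ω; simp [not_lt]
    rw [this, measure_compl (measurableSet_lt hX measurable_const) (measure_ne_top μ _), measure_univ, hlt]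
  unfold cdfOf
  rw [hset, hcompl, ENNReal.toReal_sub_of_le prob_le_one ENNReal.one_ne_top, ENNReal.toReal_one]

theorem d1_sq_invariant_under_monotone
    {Ω : Type*} [MeasurableSpace Ω] (μ : Measure Ω) [IsProbabilityMeasure μ]
    (X Y : Ω → ℝ) (hX : Measurable X) (hY : Measurable Y)
    (hGXc : Continuous (cdfOf μ X)) (hGYc : Continuous (cdfOf μ Y))
    (h : ℝ → ℝ) (hh : StrictMono h ∨ StrictAnti h) :
    3 * ∫ ω, |cdfOf μ (fun ω' => h (X ω')) (h (X ω))
          - cdfOf μ (fun ω' => h (Y ω')) (h (Y ω))| ^ 2 ∂μ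
      = 3 * ∫ ω, |cdfOf μ X (X ω) - cdfOf μ Y (Y ω)| ^ 2 ∂μ := by
  congr 1
  apply integral_congr_ae
  filter_upwards with ω
  rcases hh with hm | hm
  · rw [cdf_comp_mono μ X hm, cdf_comp_mono μ Y hm]
  · rw [cdf_comp_anti μ X hX hGXc hm, cdf_comp_anti μ Y hY hGYc hm,
      show (1 - cdfOf μ X (X ω)) - (1 - cdfOf μ Y (Y ω))
        = -(cdfOf μ X (X ω) - cdfOf μ Y (Y ω)) by ring, abs_neg]
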